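/- Let S be a symmetric positive definite d×d real matrix whose smallest eigenvalue is μ > 0, let ψ ∈ ℝ^d, b ∈ ℝ^d, x ∈ ℝ, and L ≥ 0. Let γ = S⁻¹ b and γ' = (S + ψψᵀ)⁻¹ (b + x·ψ). If |x − ⟨ψ, γ⟩| · ‖ψ‖₂ ≤ L, then ‖γ' − γ‖₂ ≤ L / μ. -/

import Mathlib

open Matrix

/-- The Euclidean (ℓ²) norm of a vector in `ℝ^d`. -/
noncomputable def euclNorm {d : ℕ} (v : Fin d → ℝ) : ℝ :=
  ‖(WithLp.equiv 2 (Fin d → ℝ)).symm v‖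

lemma posSemidef_vecMulVec {d : ℕ} (ψ : Fin d → ℝ) : (vecMulVec ψ ψ).PosSemidef := by
  rw [vecMulVec_eq Unit]
  have h : replicateCol Unit ψ = (replicateRow Unit ψ)ᴴ := by
    ext i j; simp [replicateCol, replicateRow, conjTranspose]
  rw [h]
  exact posSemidef_conjTranspose_mul_self _

lemma vecMulVec_mulVec' {d : ℕ} (ψ v : Fin d → ℝ) :
    (vecMulVec ψ ψ).mulVec v = (ψ ⬝ᵥ v) • ψ := by
  funext i
  simp [vecMulVec, mulVec, dotProduct, Finset.mul_sum, mul_comm, mul_left_comm]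

lemma dot_eq_inner {d : ℕ} (v w : Fin d → ℝ) :
    v ⬝ᵥ w = inner ℝ ((WithLp.equiv 2 (Fin d → ℝ)).symm v) ((WithLp.equiv 2 (Fin d → ℝ)).symm w) := by
  simp [dotProduct, PiLp.inner_apply, RCLike.inner_apply, mul_comm]

theorem stmt_11 {d : ℕ} (S : Matrix (Fin d) (Fin d) ℝ) (hS : S.PosDef)
    (μ : ℝ) (hμ : IsLeast (spectrum ℝ S) μ) (hμpos : 0 < μ)
    (ψ b : Fin d → ℝ) (x L : ℝ) (hL : 0 ≤ L)
    (γ γ' : Fin d → ℝ)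
    (hγ : γ = S⁻¹.mulVec b)
    (hγ' : γ' = (S + vecMulVec ψ ψ)⁻¹.mulVec (b + x • ψ))
    (hgrad : |x - ψ ⬝ᵥ γ| * euclNorm ψ ≤ L) :
    euclNorm (γ' - γ) ≤ L / μ := by
  set A := S + vecMulVec ψ ψ with hA_def
  have hA : A.PosDef := hS.add_posSemidef (posSemidef_vecMulVec ψ)
  -- S - μ•1 is PosSemidef
  have hMherm : (S - (algebraMap ℝ (Matrix (Fin d) (Fin d) ℝ)) μ).IsHermitian := by
    refine hS.1.sub ?_
    rw [Matrix.algebraMap_eq_diagonal]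
    exact isHermitian_diagonal _
  have hM : (S - (algebraMap ℝ (Matrix (Fin d) (Fin d) ℝ)) μ).PosSemidef := by
    apply hMherm.posSemidef_iff_eigenvalues_nonneg.mpr
    intro i
    have h1 := hMherm.eigenvalues_mem_spectrum_real i
    rw [← spectrum.sub_singleton_eq] at h1
    obtain ⟨s, hs, t, ht, hst⟩ := Set.mem_sub.mp h1
    rw [Set.mem_singleton_iff] at ht
    subst ht
    rw [← hst]
    have := hμ.2 hs
    linarith [show (0 : Fin d → ℝ) i = 0 from rfl]
  -- Rayleigh bound for A
  have hRay : ∀ v : Fin d → ℝ, μ * (v ⬝ᵥ v) ≤ v ⬝ᵥ A.mulVec v := by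
    intro v
    have h1 : 0 ≤ v ⬝ᵥ (S - (algebraMap ℝ (Matrix (Fin d) (Fin d) ℝ)) μ).mulVec v := by
      simpa using hM.dotProduct_mulVec_nonneg v
    have h2 : 0 ≤ v ⬝ᵥ (vecMulVec ψ ψ).mulVec v := by
      simpa using (posSemidef_vecMulVec ψ).dotProduct_mulVec_nonneg v
    have h3 : v ⬝ᵥ (S - (algebraMap ℝ (Matrix (Fin d) (Fin d) ℝ)) μ).mulVec v
        = v ⬝ᵥ S.mulVec v - μ * (v ⬝ᵥ v) := by
      rw [Algebra.algebraMap_eq_smul_one, sub_mulVec, dotProduct_sub]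
      congr 1
      rw [smul_mulVec, one_mulVec, dotProduct_smul]
      simp
    have h4 : v ⬝ᵥ A.mulVec v = v ⬝ᵥ S.mulVec v + v ⬝ᵥ (vecMulVec ψ ψ).mulVec v := by
      rw [hA_def, add_mulVec, dotProduct_add]
    linarith
  -- key equation : A.mulVec (γ' - γ) = (x - ψ ⬝ᵥ γ) • ψ
  have hAγ' : A.mulVec γ' = b + x • ψ := by
    rw [hγ', mulVec_mulVec, Matrix.mul_nonsing_inv _ (isUnit_iff_isUnit_det _ |>.1 hA.isUnit),
      one_mulVec]
  have hSγ : S.mulVec γ = b := by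
    rw [hγ, mulVec_mulVec, Matrix.mul_nonsing_inv _ (isUnit_iff_isUnit_det _ |>.1 hS.isUnit),
      one_mulVec]
  have hAγ : A.mulVec γ = b + (ψ ⬝ᵥ γ) • ψ := by
    rw [hA_def, add_mulVec, hSγ, vecMulVec_mulVec']
  have hkey : A.mulVec (γ' - γ) = (x - ψ ⬝ᵥ γ) • ψ := by
    rw [mulVec_sub, hAγ', hAγ, add_sub_add_left_eq_sub, ← sub_smul]
  -- put pieces together
  set v := γ' - γ with hv
  set c := x - ψ ⬝ᵥ γ with hc
  have hvv : v ⬝ᵥ v = euclNorm v ^ 2 := by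
    rw [dot_eq_inner, euclNorm, real_inner_self_eq_norm_sq]
  have hnormv : 0 ≤ euclNorm v := norm_nonneg _
  have hnormψ : 0 ≤ euclNorm ψ := norm_nonneg _
  have hCS : v ⬝ᵥ A.mulVec v ≤ |c| * euclNorm ψ * euclNorm v := by
    rw [hkey, dotProduct_smul]
    have h1 : v ⬝ᵥ ψ ≤ |v ⬝ᵥ ψ| := le_abs_self _
    have h2 : |v ⬝ᵥ ψ| ≤ euclNorm v * euclNorm ψ := by
      rw [dot_eq_inner]
      exact abs_real_inner_le_norm _ _
    calc c • (v ⬝ᵥ ψ) ≤ |c| * |v ⬝ᵥ ψ| := by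
          rw [smul_eq_mul]
          calc c * (v ⬝ᵥ ψ) ≤ |c * (v ⬝ᵥ ψ)| := le_abs_self _
          _ = |c| * |v ⬝ᵥ ψ| := abs_mul _ _
      _ ≤ |c| * (euclNorm v * euclNorm ψ) := by
          exact mul_le_mul_of_nonneg_left h2 (abs_nonneg _)
      _ = |c| * euclNorm ψ * euclNorm v := by ring
  have hmain : μ * euclNorm v ^ 2 ≤ L * euclNorm v := by
    have := hRay v
    rw [hvv] at this
    have hLv : |c| * euclNorm ψ * euclNorm v ≤ L * euclNorm v :=
      mul_le_mul_of_nonneg_right hgrad hnormv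
    linarith
  rcases eq_or_lt_of_le hnormv with h0 | h0
  · rw [← h0]
    positivity
  · rw [le_div_iff₀ hμpos]
    have : μ * euclNorm v * euclNorm v ≤ L * euclNorm v := by
      calc μ * euclNorm v * euclNorm v = μ * euclNorm v ^ 2 := by ring
      _ ≤ L * euclNorm v := hmain
    have := le_of_mul_le_mul_right this h0
    linarith
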